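/- Let G be a finite 2-connected graph and let K be a connected subgraph of G with at least three vertices. Let G_K be the graph obtained from G by contracting each connected component of G - K to a single vertex (and deleting multiple edges). Then G_K is 2-connected. -/

import Mathlib

open SimpleGraph

universe u w

/-- 2-connected: at least three vertices, and deleting any single vertex leaves a
connected graph. -/
def TwoConnected {V : Type u} (G : SimpleGraph V) : Prop :=
  3 ≤ Nat.card V ∧ ∀ v : V, (G.induce {u | u ≠ v}).Connected


/-- The contraction minor `G_K`: keep the vertices of `S` and the edges among them, and
contract each connected component of `G - S` to a single new vertex, adjacent to exactly
those vertices of `S` having a neighbour in that component. -/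
def GK {V : Type u} (G : SimpleGraph V) (S : Set V) :
    SimpleGraph (↥S ⊕ (G.induce Sᶜ).ConnectedComponent) where
  Adj a b :=
    match a, b with
    | Sum.inl x, Sum.inl y => G.Adj x y
    | Sum.inl x, Sum.inr c => ∃ w : ↥(Sᶜ : Set V),
        (G.induce Sᶜ).connectedComponentMk w = c ∧ G.Adj x w
    | Sum.inr c, Sum.inl x => ∃ w : ↥(Sᶜ : Set V),
        (G.induce Sᶜ).connectedComponentMk w = c ∧ G.Adj x w
    | Sum.inr _, Sum.inr _ => False
  symm := ⟨by
    rintro (x | c) (y | d) h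
    · exact h.symm
    · exact h
    · exact h
    · exact h.elim⟩
  loopless := ⟨by
    rintro (x | c) h
    · exact G.irrefl h
    · exact h⟩


open Classical in
noncomputable def piGK {V : Type u} (G : SimpleGraph V) (S : Set V) (u : V) :
    ↥S ⊕ (G.induce Sᶜ).ConnectedComponent :=
  if h : u ∈ S then Sum.inl ⟨u, h⟩
  else Sum.inr ((G.induce Sᶜ).connectedComponentMk ⟨u, h⟩)

lemma piGK_ne_inl {V : Type u} (G : SimpleGraph V) (S : Set V) {x : V} (hxS : x ∈ S)
    {u : V} (hu : u ≠ x) : piGK G S u ≠ Sum.inl ⟨x, hxS⟩ := by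
  unfold piGK
  split
  · intro h
    exact hu (congrArg (fun z => Sum.elim Subtype.val (fun _ => x) z) h)
  · simp

lemma piGK_mem {V : Type u} (G : SimpleGraph V) (S : Set V) {u : V} (h : u ∈ S) :
    piGK G S u = Sum.inl ⟨u, h⟩ := dif_pos h

lemma piGK_not_mem {V : Type u} (G : SimpleGraph V) (S : Set V) {u : V} (h : u ∉ S) :
    piGK G S u = Sum.inr ((G.induce Sᶜ).connectedComponentMk ⟨u, h⟩) := dif_neg h

lemma lemA {V : Type u} (G : SimpleGraph V) (S : Set V) {x : V} (hxS : x ∈ S) :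
    ∀ {a b : ↥{u : V | u ≠ x}} (_ : (G.induce {u : V | u ≠ x}).Walk a b),
    ((GK G S).induce {z : ↥S ⊕ (G.induce Sᶜ).ConnectedComponent |
        z ≠ Sum.inl ⟨x, hxS⟩}).Reachable
      ⟨piGK G S a.val, piGK_ne_inl G S hxS a.prop⟩
      ⟨piGK G S b.val, piGK_ne_inl G S hxS b.prop⟩ := by
  intro a b p
  induction p with
  | nil => exact Reachable.refl _
  | @cons a a2 b h q ih =>
    refine Reachable.trans ?_ ih
    have hG : G.Adj a.val a2.val := h
    by_cases haS : a.val ∈ S <;> by_cases ha2S : a2.val ∈ S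
    · apply Adj.reachable
      show (GK G S).Adj (piGK G S a.val) (piGK G S a2.val)
      rw [piGK_mem G S haS, piGK_mem G S ha2S]
      exact hG
    · apply Adj.reachable
      show (GK G S).Adj (piGK G S a.val) (piGK G S a2.val)
      rw [piGK_mem G S haS, piGK_not_mem G S ha2S]
      exact ⟨⟨a2.val, ha2S⟩, rfl, hG⟩
    · apply Adj.reachable
      show (GK G S).Adj (piGK G S a.val) (piGK G S a2.val)
      rw [piGK_not_mem G S haS, piGK_mem G S ha2S]
      exact ⟨⟨a.val, haS⟩, rfl, hG.symm⟩
    · have : piGK G S a.val = piGK G S a2.val := by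
        rw [piGK_not_mem G S haS, piGK_not_mem G S ha2S]
        exact congrArg _ (ConnectedComponent.sound (Adj.reachable (by exact hG)))
      have heq : (⟨piGK G S a.val, piGK_ne_inl G S hxS a.prop⟩ :
          ↥{z : ↥S ⊕ (G.induce Sᶜ).ConnectedComponent | z ≠ Sum.inl ⟨x, hxS⟩}) =
          ⟨piGK G S a2.val, piGK_ne_inl G S hxS a2.prop⟩ := Subtype.ext this
      rw [heq]

lemma lemB {V : Type u} (G : SimpleGraph V) (S : Set V) {x : V} :
    ∀ {a b : ↥{u : V | u ≠ x}} (_ : (G.induce {u : V | u ≠ x}).Walk a b)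
    (ha : a.val ∉ S) (_ : b.val ∈ S),
    ∃ s : ↥S, s.val ≠ x ∧
      (GK G S).Adj (Sum.inl s) (Sum.inr ((G.induce Sᶜ).connectedComponentMk ⟨a.val, ha⟩)) := by
  intro a b p
  induction p with
  | nil => intro ha hb; exact absurd hb ha
  | @cons a a2 b h q ih =>
    intro ha hb
    have hG : G.Adj a.val a2.val := h
    by_cases ha2S : a2.val ∈ S
    · exact ⟨⟨a2.val, ha2S⟩, a2.prop, ⟨⟨a.val, ha⟩, rfl, hG.symm⟩⟩
    · obtain ⟨s, hsx, hadj⟩ := ih ha2S hb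
      refine ⟨s, hsx, ?_⟩
      have hcomp : (G.induce Sᶜ).connectedComponentMk ⟨a2.val, ha2S⟩ =
          (G.induce Sᶜ).connectedComponentMk ⟨a.val, ha⟩ :=
        ConnectedComponent.sound (Adj.reachable (by exact hG.symm))
      rwa [hcomp] at hadj

lemma lemC {V : Type u} (G : SimpleGraph V) (S : Set V)
    (c0 : (G.induce Sᶜ).ConnectedComponent) :
    ∀ {a b : ↥S} (_ : (G.induce S).Walk a b),
    ((GK G S).induce {z : ↥S ⊕ (G.induce Sᶜ).ConnectedComponent |
        z ≠ Sum.inr c0}).Reachable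
      ⟨Sum.inl a, by simp⟩ ⟨Sum.inl b, by simp⟩ := by
  intro a b p
  induction p with
  | nil => exact Reachable.refl _
  | @cons a a2 b h q ih =>
    refine Reachable.trans (Adj.reachable ?_) ih
    show (GK G S).Adj (Sum.inl a) (Sum.inl a2)
    exact h

/-- If `K` is a connected subgraph on at least three vertices of a
finite 2-connected graph `G`, then the contraction minor `G_K` is 2-connected. -/
theorem stmt_11 {V : Type u} [Fintype V] (G : SimpleGraph V) (h2 : TwoConnected G)
    (S : Set V) (hconn : (G.induce S).Connected) (h3 : 3 ≤ S.ncard) :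
    TwoConnected (GK G S) := by
  have hScard : 1 < S.ncard := by omega
  constructor
  · rw [Nat.card_sum]
    have : S.ncard = Nat.card ↥S := (Nat.card_coe_set_eq S).symm
    omega
  rintro (x0 | c0)
  · -- removing a vertex of S
    obtain ⟨y, hyS, hyx⟩ := Set.exists_ne_of_one_lt_ncard hScard x0.val
    have hx0S : x0.val ∈ S := x0.prop
    -- representative function
    have rep : ∀ p : ↥{z : ↥S ⊕ (G.induce Sᶜ).ConnectedComponent | z ≠ Sum.inl x0},
        ∃ (r : V) (hr : r ≠ x0.val),
          (⟨piGK G S r, piGK_ne_inl G S hx0S hr⟩ :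
            ↥{z : ↥S ⊕ (G.induce Sᶜ).ConnectedComponent | z ≠ Sum.inl ⟨x0.val, hx0S⟩}) = p := by
      rintro ⟨(s | c), hp⟩
      · refine ⟨s.val, fun hv => hp (congrArg Sum.inl (Subtype.ext hv)), ?_⟩
        exact Subtype.ext (piGK_mem G S s.prop)
      · obtain ⟨w, hw⟩ := c.exists_rep
        refine ⟨w.val, fun hv => w.prop (hv ▸ hx0S), ?_⟩
        exact Subtype.ext ((piGK_not_mem G S w.prop).trans (congrArg Sum.inr hw))
    rw [connected_iff]
    constructor
    · intro p q
      obtain ⟨rp, hrp, hep⟩ := rep p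
      obtain ⟨rq, hrq, heq⟩ := rep q
      obtain ⟨wlk⟩ := ((h2.2 x0.val).preconnected ⟨rp, hrp⟩ ⟨rq, hrq⟩)
      have := lemA G S hx0S wlk
      rw [hep, heq] at this
      exact this
    · exact ⟨⟨Sum.inl ⟨y, hyS⟩, fun hv => hyx (congrArg (fun z =>
        Sum.elim Subtype.val (fun _ => x0.val) z) hv)⟩⟩
  · -- removing a component vertex
    have hne : S.ncard ≠ 0 := by omega
    obtain ⟨x, hxS⟩ := Set.nonempty_of_ncard_ne_zero hne
    obtain ⟨y, hyS, hyx⟩ := Set.exists_ne_of_one_lt_ncard hScard x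
    have key : ∀ p : ↥{z : ↥S ⊕ (G.induce Sᶜ).ConnectedComponent | z ≠ Sum.inr c0},
        ∃ s : ↥S, ((GK G S).induce {z : ↥S ⊕ (G.induce Sᶜ).ConnectedComponent |
          z ≠ Sum.inr c0}).Reachable p ⟨Sum.inl s, by simp⟩ := by
      rintro ⟨(s | c), hp⟩
      · exact ⟨s, Reachable.refl _⟩
      · obtain ⟨w, hw⟩ := c.exists_rep
        have hwx : w.val ≠ x := fun h => w.prop (h ▸ hxS)
        obtain ⟨wlk⟩ := (h2.2 x).preconnected ⟨w.val, hwx⟩ ⟨y, hyx⟩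
        obtain ⟨s, hsx, hadj⟩ := lemB G S wlk w.prop hyS
        have hc : (G.induce Sᶜ).connectedComponentMk ⟨w.val, w.prop⟩ = c := hw
        rw [hc] at hadj
        refine ⟨s, (Adj.reachable ?_).symm⟩
        show (GK G S).Adj (Sum.inl s) (Sum.inr c)
        exact hadj
    rw [connected_iff]
    constructor
    · intro p q
      obtain ⟨sp, hp⟩ := key p
      obtain ⟨sq, hq⟩ := key q
      obtain ⟨wlk⟩ := hconn.preconnected sp sq
      exact (hp.trans (lemC G S c0 wlk)).trans hq.symm
    · exact ⟨⟨Sum.inl ⟨x, hxS⟩, by simp⟩⟩
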